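/- Let G = (S₀, S₁, E) be a finite weighted game, s_init ∈ S an initial state, and t ∈ ℚ (t ≥ 0) a threshold. Player P₀ has a winning strategy in G from s_init for the objective AEL(t) = EGL ∩ AE(t) if, and only if, P₀ has a winning strategy in the expanded infinite-state game G' from the configuration (s_init, 0) for the mean-payoff objective MP(t) = {π : MPsup(π) ≤ t}. -/

import Mathlib

namespace AvgEnergy

/-- An integer-weighted edge over a state space `α`. -/
abbrev WEdge (α : Type*) : Type _ := α × ℤ × α

/-- A finite turn-based weighted game `G = (S₀, S₁, E)`:
`S₀` and `S₁` are disjoint sets of states covering `S`, edges carry integer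
weights bounded in absolute value by `W`, and every state has an outgoing edge. -/
structure Game (S : Type*) where
  S0 : Set S
  S1 : Set S
  E : Set (WEdge S)
  W : ℕ
  disj : Disjoint S0 S1
  cover : S0 ∪ S1 = Set.univ
  wbound : ∀ e ∈ E, -(W : ℤ) ≤ e.2.1 ∧ e.2.1 ≤ (W : ℤ)
  total : ∀ s : S, ∃ w s', (s, w, s') ∈ E

variable {α : Type*}

/-- A play from `s`: an infinite sequence of consecutive edges of `E` starting at `s`. -/
def IsPlay (E : Set (WEdge α)) (s : α) (π : ℕ → WEdge α) : Prop :=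
  (∀ i, π i ∈ E) ∧ (π 0).1 = s ∧ ∀ i, (π i).2.2 = (π (i + 1)).1

/-- Energy level of the length-`n` prefix of `π`. -/
def EL (π : ℕ → WEdge α) (n : ℕ) : ℤ :=
  ∑ i ∈ Finset.range n, (π i).2.1

/-- Mean-payoff of the length-`n` prefix of `π`. -/
def MP (π : ℕ → WEdge α) (n : ℕ) : ℚ := (EL π n : ℚ) / n

/-- Average-energy of the length-`n` prefix of `π`. -/
def AE (π : ℕ → WEdge α) (n : ℕ) : ℚ :=
  (∑ i ∈ Finset.range n, (EL π (i + 1) : ℚ)) / n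

/-- `limsup_{n → ∞} f n ≤ t` (ε-characterization, valid in `ℚ`). -/
def LimsupLE (f : ℕ → ℚ) (t : ℚ) : Prop :=
  ∀ ε : ℚ, 0 < ε → ∃ N, ∀ n ≥ N, f n ≤ t + ε

/-- The state reached after following the finite prefix `ρ` from `s`. -/
def EndSt (s : α) (ρ : List (WEdge α)) : α :=
  (ρ.getLast?.map (fun e => e.2.2)).getD s

/-- `ρ` is a finite play prefix from `s` in the graph with edge set `E`. -/
def IsPrefixFrom (E : Set (WEdge α)) (s : α) (ρ : List (WEdge α)) : Prop :=
  (∀ e ∈ ρ, e ∈ E) ∧ List.Chain' (fun e f => e.2.2 = f.1) ρ ∧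
    ∀ e, ρ.head? = some e → e.1 = s

/-- A strategy (of the player owning the states in `S0`) from `s`: it assigns to every
play prefix from `s` ending in a state of `S0` a valid outgoing edge. -/
def IsStrategy (E : Set (WEdge α)) (S0 : Set α) (s : α)
    (σ : List (WEdge α) → WEdge α) : Prop :=
  ∀ ρ, IsPrefixFrom E s ρ → EndSt s ρ ∈ S0 → σ ρ ∈ E ∧ (σ ρ).1 = EndSt s ρ

/-- The length-`n` prefix of a play, as a list of edges. -/
def Pref (π : ℕ → WEdge α) (n : ℕ) : List (WEdge α) :=
  List.ofFn (fun i : Fin n => π i)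

/-- `π` is an outcome of the strategy `σ` (for the player owning `S0`) from `s`. -/
def IsOutcome (E : Set (WEdge α)) (S0 : Set α) (s : α)
    (σ : List (WEdge α) → WEdge α) (π : ℕ → WEdge α) : Prop :=
  IsPlay E s π ∧ ∀ n, EndSt s (Pref π n) ∈ S0 → π n = σ (Pref π n)

/-- Configurations of the expanded game: `⊥` is `none`. -/
abbrev Conf (S : Type*) := Option (S × ℕ)

/-- Edges of the expanded infinite-state weighted game `G'`:
`((s,c), c', (s',c'))` whenever `(s,w,s') ∈ E` and `c' = c + w ≥ 0`;
`((s,c), ⌈t⌉+1, ⊥)` whenever some `(s,w,s') ∈ E` has `c + w < 0`; and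
`(⊥, ⌈t⌉+1, ⊥)`. -/
def ExpE {S : Type*} (G : Game S) (t : ℚ) : Set (WEdge (Conf S)) :=
  {e | (∃ (s : S) (c : ℕ) (w : ℤ) (s' : S) (c' : ℕ), (s, w, s') ∈ G.E ∧ (c : ℤ) + w = (c' : ℤ) ∧
          e = (some (s, c), (c' : ℤ), some (s', c'))) ∨
       (∃ (s : S) (c : ℕ) (w : ℤ) (s' : S), (s, w, s') ∈ G.E ∧ (c : ℤ) + w < 0 ∧
          e = (some (s, c), ⌈t⌉ + 1, (none : Conf S))) ∨
       e = ((none : Conf S), ⌈t⌉ + 1, (none : Conf S))}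

/-- The configurations of the expanded game belonging to player `P₀`. -/
def ExpS0 {S : Type*} (G : Game S) : Set (Conf S) :=
  {γ | ∃ s c, s ∈ G.S0 ∧ γ = some (s, c)}

/-- The state (configuration) visited at position `n` along a play from `s`:
`γ₀ = s` and `γ_{n+1}` is the target of the `(n+1)`-st edge. -/
def StAt (s : α) (π : ℕ → WEdge α) : ℕ → α
  | 0 => s
  | n + 1 => (π n).2.2

end AvgEnergy

namespace AvgEnergy

section Aux

variable {α : Type*}

/-! ### Basic lemmas about prefixes -/

lemma Pref_length (π : ℕ → WEdge α) (n : ℕ) : (Pref π n).length = n := by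
  simp [Pref]

lemma Pref_zero (π : ℕ → WEdge α) : Pref π 0 = [] := rfl

lemma Pref_succ (π : ℕ → WEdge α) (n : ℕ) :
    Pref π (n + 1) = Pref π n ++ [π n] := by
  rw [Pref, List.ofFn_succ', List.concat_eq_append]
  rfl

lemma Pref_get (π : ℕ → WEdge α) (n k : ℕ) (h : k < (Pref π n).length) :
    (Pref π n).get ⟨k, h⟩ = π k := by
  simp [Pref, List.get_ofFn]

lemma Pref_take (π : ℕ → WEdge α) {k n : ℕ} (h : k ≤ n) :
    (Pref π n).take k = Pref π k := by
  induction k with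
  | zero => simp [Pref_zero]
  | succ k ih =>
    have hk : k < (Pref π n).length := by rw [Pref_length]; omega
    have := List.take_concat_get' (Pref π n) k hk
    rw [← this, Pref_succ, ih (by omega)]
    congr 1
    · simpa using Pref_get π n k hk

lemma EndSt_nil (s : α) : EndSt s ([] : List (WEdge α)) = s := rfl

lemma EndSt_snoc (s : α) (l : List (WEdge α)) (e : WEdge α) :
    EndSt s (l ++ [e]) = e.2.2 := by
  simp [EndSt, List.getLast?_concat]

lemma EndSt_cons (s : α) (e : WEdge α) (l : List (WEdge α)) :
    EndSt s (e :: l) = EndSt e.2.2 l := by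
  cases l with
  | nil => simp [EndSt]
  | cons f l => simp [EndSt, List.getLast?]

lemma EndSt_Pref (s : α) (π : ℕ → WEdge α) (n : ℕ) :
    EndSt s (Pref π n) = StAt s π n := by
  cases n with
  | zero => rfl
  | succ n => rw [Pref_succ, EndSt_snoc]; rfl

lemma src_eq_StAt {E : Set (WEdge α)} {s : α} {π : ℕ → WEdge α}
    (h : IsPlay E s π) (n : ℕ) : (π n).1 = StAt s π n := by
  cases n with
  | zero => exact h.2.1
  | succ n => exact (h.2.2 n).symm

/-! ### Energy of a list of edges -/

/-- Sum of the weights of a list of edges. -/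
def listEL (l : List (WEdge α)) : ℤ := (l.map fun e => e.2.1).sum

lemma listEL_nil : listEL ([] : List (WEdge α)) = 0 := rfl

lemma listEL_snoc (l : List (WEdge α)) (e : WEdge α) :
    listEL (l ++ [e]) = listEL l + e.2.1 := by
  simp [listEL]

lemma listEL_cons (e : WEdge α) (l : List (WEdge α)) :
    listEL (e :: l) = e.2.1 + listEL l := by
  simp [listEL]

lemma EL_eq_listEL (π : ℕ → WEdge α) (n : ℕ) : EL π n = listEL (Pref π n) := by
  simp only [EL, listEL, Pref, List.map_ofFn, List.sum_ofFn]
  exact Finset.sum_range _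

lemma EL_succ (π : ℕ → WEdge α) (n : ℕ) : EL π (n + 1) = EL π n + (π n).2.1 := by
  simp [EL, Finset.sum_range_succ]

lemma EL_zero (π : ℕ → WEdge α) : EL π 0 = 0 := by simp [EL]

/-! ### Valid prefixes, consistency -/

lemma isPrefixFrom_nil (E : Set (WEdge α)) (s : α) : IsPrefixFrom E s [] := by
  refine ⟨by simp, by simp [List.Chain'], by simp⟩

lemma IsPrefixFrom.snoc {E : Set (WEdge α)} {s : α} {l : List (WEdge α)} {e : WEdge α}
    (h : IsPrefixFrom E s l) (he : e ∈ E) (hsrc : e.1 = EndSt s l) :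
    IsPrefixFrom E s (l ++ [e]) := by
  obtain ⟨h1, h2, h3⟩ := h
  refine ⟨?_, ?_, ?_⟩
  · intro f hf
    rcases List.mem_append.1 hf with hf | hf
    · exact h1 f hf
    · simp at hf; subst hf; exact he
  · refine List.IsChain.append h2 (by simp) ?_
    intro x hx y hy
    simp at hy; subst hy
    rw [hsrc]
    cases l with
    | nil => simp at hx
    | cons a l' =>
      rw [List.getLast?_eq_getLast (by simp)] at hx
      simp at hx
      subst hx
      rw [EndSt, List.getLast?_eq_getLast (by simp)]
      simp
  · intro f hf
    cases l with
    | nil => simp at hf; subst hf; rw [hsrc]; rfl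
    | cons a l' => simp at hf; subst hf; exact h3 a rfl

lemma IsPrefixFrom.take {E : Set (WEdge α)} {s : α} {l : List (WEdge α)}
    (h : IsPrefixFrom E s l) (k : ℕ) : IsPrefixFrom E s (l.take k) := by
  obtain ⟨h1, h2, h3⟩ := h
  refine ⟨fun e he => h1 e (List.mem_of_mem_take he), h2.take k, ?_⟩
  intro e he
  apply h3
  cases l with
  | nil => simp at he
  | cons a l' =>
    cases k with
    | zero => simp at he
    | succ k => simp at he ⊢; exact he

lemma isPrefixFrom_Pref {E : Set (WEdge α)} {s : α} {π : ℕ → WEdge α}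
    (h : IsPlay E s π) (n : ℕ) : IsPrefixFrom E s (Pref π n) := by
  induction n with
  | zero => exact isPrefixFrom_nil E s
  | succ n ih =>
    rw [Pref_succ]
    exact ih.snoc (h.1 n) (by rw [src_eq_StAt h, ← EndSt_Pref])

/-- `ρ` is a valid prefix from `s` which is moreover consistent with the strategy `σ`. -/
def Consistent (E : Set (WEdge α)) (S0 : Set α) (s : α)
    (σ : List (WEdge α) → WEdge α) (ρ : List (WEdge α)) : Prop :=
  IsPrefixFrom E s ρ ∧
    ∀ k (h : k < ρ.length), EndSt s (ρ.take k) ∈ S0 → ρ.get ⟨k, h⟩ = σ (ρ.take k)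

lemma consistent_nil (E : Set (WEdge α)) (S0 : Set α) (s : α)
    (σ : List (WEdge α) → WEdge α) : Consistent E S0 s σ [] :=
  ⟨isPrefixFrom_nil E s, fun k h => by simp at h⟩

lemma Consistent.snoc {E : Set (WEdge α)} {S0 : Set α} {s : α}
    {σ : List (WEdge α) → WEdge α} {ρ : List (WEdge α)} {e : WEdge α}
    (h : Consistent E S0 s σ ρ) (he : e ∈ E) (hsrc : e.1 = EndSt s ρ)
    (hcons : EndSt s ρ ∈ S0 → e = σ ρ) : Consistent E S0 s σ (ρ ++ [e]) := by
  refine ⟨h.1.snoc he hsrc, ?_⟩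
  intro k hk
  rcases lt_or_eq_of_le (Nat.lt_succ_iff.1 (by simpa using hk)) with hlt | heq
  · have htake : (ρ ++ [e]).take k = ρ.take k := List.take_append_of_le_length (by omega)
    have hget : (ρ ++ [e]).get ⟨k, hk⟩ = ρ.get ⟨k, hlt⟩ := by simp [List.getElem_append, hlt]
    rw [htake, hget]
    exact h.2 k hlt
  · subst heq
    have htake : (ρ ++ [e]).take ρ.length = ρ := by
      rw [List.take_append_of_le_length le_rfl, List.take_length]
    have hget : (ρ ++ [e]).get ⟨ρ.length, hk⟩ = e := by
      simp
    rw [htake, hget]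
    exact hcons

lemma Consistent.take {E : Set (WEdge α)} {S0 : Set α} {s : α}
    {σ : List (WEdge α) → WEdge α} {ρ : List (WEdge α)}
    (h : Consistent E S0 s σ ρ) (n : ℕ) : Consistent E S0 s σ (ρ.take n) := by
  refine ⟨h.1.take n, ?_⟩
  intro k hk
  have hk' : k < ρ.length := lt_of_lt_of_le hk (by simpa using List.length_take_le n ρ)
  intro hmem
  have h1 : (ρ.take n).take k = ρ.take k := by
    rw [List.take_take, min_eq_left]
    have := hk
    simp at this
    omega
  have hget : (ρ.take n).get ⟨k, hk⟩ = ρ.get ⟨k, hk'⟩ := by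
    simp [List.get_eq_getElem, List.getElem_take]
  rw [h1] at hmem ⊢
  rw [hget]
  exact h.2 k hk' hmem

lemma consistent_Pref {E : Set (WEdge α)} {S0 : Set α} {s : α}
    {σ : List (WEdge α) → WEdge α} {π : ℕ → WEdge α}
    (h : IsOutcome E S0 s σ π) (n : ℕ) : Consistent E S0 s σ (Pref π n) := by
  refine ⟨isPrefixFrom_Pref h.1 n, ?_⟩
  intro k hk hmem
  have hk' : k ≤ n := by rw [Pref_length] at hk; omega
  rw [Pref_take π hk'] at hmem ⊢
  rw [Pref_get]
  exact h.2 k hmem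

/-- Any strategy-consistent valid prefix can be extended to a full outcome of the
strategy. -/
lemma exists_outcome_extending {E : Set (WEdge α)} {S0 : Set α} {s : α}
    {σ : List (WEdge α) → WEdge α} (hσ : IsStrategy E S0 s σ)
    (htot : ∀ x : α, ∃ w x', (x, w, x') ∈ E)
    (ρ : List (WEdge α)) (hρ : Consistent E S0 s σ ρ) :
    ∃ π, IsOutcome E S0 s σ π ∧ Pref π ρ.length = ρ := by
  classical
  choose wf sf hf using htot
  set nxt : List (WEdge α) → WEdge α :=
    fun l => if EndSt s l ∈ S0 then σ l else (EndSt s l, wf (EndSt s l), sf (EndSt s l))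
    with hnxt
  set L : ℕ → List (WEdge α) := fun k => Nat.rec ρ (fun _ l => l ++ [nxt l]) k with hL
  have hLs : ∀ k, L (k + 1) = L k ++ [nxt (L k)] := fun k => rfl
  have hcons : ∀ k, Consistent E S0 s σ (L k) := by
    intro k
    induction k with
    | zero => exact hρ
    | succ k ih =>
      rw [hLs k]
      by_cases hmem : EndSt s (L k) ∈ S0
      · have h1 := hσ (L k) ih.1 hmem
        have h2 : nxt (L k) = σ (L k) := if_pos hmem
        exact ih.snoc (h2 ▸ h1.1) (h2 ▸ h1.2) (fun _ => h2)
      · have h2 : nxt (L k) = (EndSt s (L k), wf (EndSt s (L k)), sf (EndSt s (L k))) :=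
          if_neg hmem
        exact ih.snoc (h2 ▸ hf (EndSt s (L k))) (h2 ▸ rfl) (fun h => absurd h hmem)
  have hlen : ∀ k, (L k).length = ρ.length + k := by
    intro k
    induction k with
    | zero => rfl
    | succ k ih =>
      rw [hLs k, List.length_append, ih, List.length_singleton]
      omega
  set π : ℕ → WEdge α := fun n =>
    if h : n < ρ.length then ρ.get ⟨n, h⟩ else nxt (L (n - ρ.length)) with hπ
  have hPref1 : ∀ n, n ≤ ρ.length → Pref π n = ρ.take n := by
    intro n hn
    induction n with
    | zero => simp [Pref_zero]
    | succ n ih =>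
      have hlt : n < ρ.length := by omega
      rw [Pref_succ, ih (by omega)]
      have : π n = ρ.get ⟨n, hlt⟩ := dif_pos hlt
      rw [this]
      simpa [List.get_eq_getElem] using List.take_concat_get' ρ n hlt
  have hPref2 : ∀ k, Pref π (ρ.length + k) = L k := by
    intro k
    induction k with
    | zero => rw [Nat.add_zero, hPref1 ρ.length le_rfl, List.take_length]; rfl
    | succ k ih =>
      have : ρ.length + (k + 1) = (ρ.length + k) + 1 := by omega
      rw [this, Pref_succ, ih, hLs k]
      congr 1
      have hnot : ¬ (ρ.length + k < ρ.length) := by omega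
      simp only [hπ, dif_neg hnot, Nat.add_sub_cancel_left]
  have hPrefC : ∀ n, Consistent E S0 s σ (Pref π n) := by
    intro n
    rcases le_or_gt n ρ.length with h | h
    · rw [hPref1 n h]; exact hρ.take n
    · have : n = ρ.length + (n - ρ.length) := by omega
      rw [this, hPref2]
      exact hcons _
  have hget : ∀ n, π n = (Pref π (n+1)).get ⟨n, by rw [Pref_length]; omega⟩ := by
    intro n; rw [Pref_get]
  refine ⟨π, ⟨⟨?_, ?_, ?_⟩, ?_⟩, by exact hPref2 0⟩
  · intro i
    have := (hPrefC (i+1)).1.1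
    exact this _ (by rw [hget i]; exact List.get_mem _ _)
  · have h1 := (hPrefC 1).1.2.2
    have : (Pref π 1).head? = some (π 0) := by
      rw [show (1:ℕ) = 0 + 1 from rfl, Pref_succ, Pref_zero]
      rfl
    exact h1 (π 0) this
  · intro i
    have h2 := (hPrefC (i+2)).1.2.1
    replace h2 := List.isChain_iff_getElem.1 h2
    have := h2 i (by rw [Pref_length]; omega)
    simpa only [Pref, List.getElem_ofFn, Fin.val_mk] using this
  · intro n hmem
    have := (hPrefC (n+1)).2 n (by rw [Pref_length]; omega)
    rw [Pref_take π (Nat.le_succ n), Pref_get] at this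
    exact this hmem

/-! ### Lowering and lifting between `G` and the expanded game `G'` -/

section Expanded

variable {S : Type}

/-- Lower an edge of the expanded game to an edge of the original game
(`d` is a default edge used in degenerate cases). -/
def lowE (d : WEdge S) (e : WEdge (Conf S)) : WEdge S :=
  match e with
  | (some p, _, some q) => (p.1, (q.2 : ℤ) - (p.2 : ℤ), q.1)
  | _ => d

/-- Lower a list of edges of the expanded game. -/
def lowL (d : WEdge S) (l : List (WEdge (Conf S))) : List (WEdge S) := l.map (lowE d)

/-- Lift an edge of `G`, given the current energy level `c`. -/
def lift1 (c : ℤ) (e : WEdge S) : WEdge (Conf S) :=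
  (some (e.1, c.toNat), c + e.2.1, some (e.2.2, (c + e.2.1).toNat))

/-- Lift a list of edges of `G`, starting from energy level `c`. -/
def liftL (c : ℤ) : List (WEdge S) → List (WEdge (Conf S))
  | [] => []
  | e :: l => lift1 c e :: liftL (c + e.2.1) l

lemma liftL_snoc (c : ℤ) (l : List (WEdge S)) (e : WEdge S) :
    liftL c (l ++ [e]) = liftL c l ++ [lift1 (c + listEL l) e] := by
  induction l generalizing c with
  | nil => simp [liftL, listEL_nil]
  | cons f l ih =>
    simp only [List.cons_append, liftL, listEL_cons, List.append_eq, ih]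
    simp [add_assoc]

/-- An edge of `G'` with a `some` source and target is of the first kind. -/
lemma expE_firstKind {G : Game S} {t : ℚ} {e : WEdge (Conf S)} (he : e ∈ ExpE G t)
    {p q : S × ℕ} (h1 : e.1 = some p) (h2 : e.2.2 = some q) :
    e.2.1 = (q.2 : ℤ) ∧ (p.1, (q.2 : ℤ) - (p.2 : ℤ), q.1) ∈ G.E := by
  rcases he with ⟨s, c, w, s', c', hE, hsum, hedge⟩ | ⟨s, c, w, s', hE, hneg, hedge⟩ | hedge
  · rw [hedge] at h1 h2 ⊢
    simp only [Option.some_inj] at h1 h2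
    subst h1; subst h2
    constructor
    · simp
    · convert hE using 1
      simp
      omega
  · rw [hedge] at h2; simp at h2
  · rw [hedge] at h1; simp at h1

/-- An edge of `G'` with source `⊥` is the `⊥` self-loop. -/
lemma expE_src_none {G : Game S} {t : ℚ} {e : WEdge (Conf S)} (he : e ∈ ExpE G t)
    (h1 : e.1 = none) : e.2.2 = none ∧ e.2.1 = ⌈t⌉ + 1 := by
  rcases he with ⟨s, c, w, s', c', _, _, hedge⟩ | ⟨s, c, w, s', _, _, hedge⟩ | hedge
  · rw [hedge] at h1; simp at h1
  · rw [hedge] at h1; simp at h1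
  · rw [hedge]; exact ⟨rfl, rfl⟩

/-- All weights in `G'` are nonnegative (for `t ≥ 0`). -/
lemma expE_wt_nonneg {G : Game S} {t : ℚ} (ht : 0 ≤ t) {e : WEdge (Conf S)}
    (he : e ∈ ExpE G t) : 0 ≤ e.2.1 := by
  have hc : (0 : ℤ) ≤ ⌈t⌉ + 1 := by
    have := Int.ceil_nonneg ht; omega
  rcases he with ⟨s, c, w, s', c', _, _, hedge⟩ | ⟨s, c, w, s', _, _, hedge⟩ | hedge <;>
    rw [hedge] <;> simp <;> omega

/-- Every configuration of `G'` has an outgoing edge. -/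
lemma expE_total (G : Game S) (t : ℚ) :
    ∀ γ : Conf S, ∃ w γ', (γ, w, γ') ∈ ExpE G t := by
  intro γ
  match γ with
  | none => exact ⟨⌈t⌉ + 1, none, Or.inr (Or.inr rfl)⟩
  | some (s, c) =>
    obtain ⟨w, s', hE⟩ := G.total s
    rcases le_or_gt 0 ((c : ℤ) + w) with hnn | hneg
    · exact ⟨(c : ℤ) + w, some (s', ((c : ℤ) + w).toNat),
        Or.inl ⟨s, c, w, s', ((c : ℤ) + w).toNat, hE, by omega,
          by rw [Int.toNat_of_nonneg hnn]⟩⟩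
    · exact ⟨⌈t⌉ + 1, none, Or.inr (Or.inl ⟨s, c, w, s', hE, hneg, rfl⟩)⟩

/-- A valid prefix of `G'` starting in `⊥` stays in `⊥`. -/
lemma endSt_none {G : Game S} {t : ℚ} (l : List (WEdge (Conf S)))
    (h : IsPrefixFrom (ExpE G t) (none : Conf S) l) : EndSt (none : Conf S) l = none := by
  induction l with
  | nil => rfl
  | cons e l ih =>
    obtain ⟨h1, h2, h3⟩ := h
    have hsrc : e.1 = none := h3 e rfl
    have htgt := (expE_src_none (h1 e (by simp)) hsrc).1
    rw [EndSt_cons, htgt]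
    apply ih
    refine ⟨fun f hf => h1 f (by simp [hf]), (List.isChain_cons.1 h2).2, ?_⟩
    intro f hf
    have := (List.isChain_cons.1 h2).1 f hf
    rw [← this, htgt]

/-- Lowering a valid prefix of `G'` that ends in a proper configuration. -/
lemma lower_prefix {G : Game S} {t : ℚ} (d : WEdge S) (p0 : S × ℕ) :
    ∀ (ρ' : List (WEdge (Conf S))), IsPrefixFrom (ExpE G t) (some p0) ρ' →
    ∀ p : S × ℕ, EndSt (some p0) ρ' = some p →
      IsPrefixFrom G.E p0.1 (lowL d ρ') ∧ EndSt p0.1 (lowL d ρ') = p.1 ∧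
        (p0.2 : ℤ) + listEL (lowL d ρ') = (p.2 : ℤ) := by
  intro ρ'
  induction ρ' generalizing p0 with
  | nil =>
    intro _ p hp
    simp only [EndSt_nil, Option.some_inj] at hp
    subst hp
    exact ⟨isPrefixFrom_nil _ _, rfl, by simp [lowL, listEL_nil]⟩
  | cons e l ih =>
    intro h p hp
    obtain ⟨h1, h2, h3⟩ := h
    have hsrc : e.1 = some p0 := h3 e rfl
    have heE : e ∈ ExpE G t := h1 e (by simp)
    rw [EndSt_cons] at hp
    -- the target of `e` must be a proper configuration
    obtain ⟨p1, htgt⟩ : ∃ p1 : S × ℕ, e.2.2 = some p1 := by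
      match htgt : e.2.2 with
      | some p1 => exact ⟨p1, rfl⟩
      | none =>
        exfalso
        have hval : IsPrefixFrom (ExpE G t) (none : Conf S) l := by
          refine ⟨fun f hf => h1 f (by simp [hf]), (List.isChain_cons.1 h2).2, ?_⟩
          intro f hf
          have := (List.isChain_cons.1 h2).1 f hf
          rw [← this, htgt]
        rw [htgt] at hp
        rw [endSt_none l hval] at hp
        cases hp
    have hfk := expE_firstKind heE hsrc htgt
    have hlowe : lowE d e = (p0.1, (p1.2 : ℤ) - (p0.2 : ℤ), p1.1) := by
      obtain ⟨e1, e2, e3⟩ := e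
      simp only at hsrc htgt
      subst hsrc htgt
      rfl
    have hval1 : IsPrefixFrom (ExpE G t) (some p1) l := by
      refine ⟨fun f hf => h1 f (by simp [hf]), (List.isChain_cons.1 h2).2, ?_⟩
      intro f hf
      have := (List.isChain_cons.1 h2).1 f hf
      rw [← this, htgt]
    rw [htgt] at hp
    obtain ⟨ih1, ih2, ih3⟩ := ih p1 hval1 p hp
    have hlowcons : lowL d (e :: l) = lowE d e :: lowL d l := rfl
    refine ⟨⟨?_, ?_, ?_⟩, ?_, ?_⟩
    · intro f hf
      rw [hlowcons] at hf
      rcases List.mem_cons.1 hf with hf | hf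
      · rw [hf, hlowe]; exact hfk.2
      · exact ih1.1 f hf
    · rw [hlowcons]
      refine List.isChain_cons.2 ⟨?_, ih1.2.1⟩
      intro y hy
      have := ih1.2.2 y hy
      rw [hlowe, this]
    · intro f hf
      rw [hlowcons] at hf
      simp only [List.head?_cons, Option.some_inj] at hf
      rw [← hf, hlowe]
    · rw [hlowcons, EndSt_cons, hlowe]
      exact ih2
    · rw [hlowcons, listEL_cons, hlowe]
      simp only
      omega

end Expanded

section Expanded2

variable {S : Type}

lemma liftL_length (c : ℤ) (l : List (WEdge S)) : (liftL c l).length = l.length := by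
  induction l generalizing c with
  | nil => rfl
  | cons e l ih => simp [liftL, ih]

lemma liftL_pref (π : ℕ → WEdge S) (n : ℕ) :
    liftL 0 (Pref π n) = Pref (fun i => lift1 (EL π i) (π i)) n := by
  induction n with
  | zero => rfl
  | succ n ih =>
    rw [Pref_succ, liftL_snoc, ih, Pref_succ]
    congr 2
    rw [← EL_eq_listEL]
    ring

lemma lowL_pref (d : WEdge S) (π' : ℕ → WEdge (Conf S)) (n : ℕ) :
    lowL d (Pref π' n) = Pref (fun i => lowE d (π' i)) n := by
  simp [lowL, Pref, List.map_ofFn]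
  rfl

/-- Lifting a valid prefix of `G` whose energy levels stay nonnegative. -/
lemma lift_prefix {G : Game S} {t : ℚ} (s0 : S) (c : ℤ) (hc : 0 ≤ c) :
    ∀ ρ : List (WEdge S), IsPrefixFrom G.E s0 ρ →
      (∀ k, 0 ≤ c + listEL (ρ.take k)) →
      IsPrefixFrom (ExpE G t) (some (s0, c.toNat)) (liftL c ρ) ∧
        EndSt (some (s0, c.toNat)) (liftL c ρ) = some (EndSt s0 ρ, (c + listEL ρ).toNat) := by
  intro ρ
  induction ρ generalizing s0 c with
  | nil =>
    intro _ _
    refine ⟨isPrefixFrom_nil _ _, ?_⟩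
    simp [liftL, EndSt_nil, listEL_nil]
  | cons e l ih =>
    intro h hnn
    obtain ⟨h1, h2, h3⟩ := h
    have hsrc : e.1 = s0 := h3 e rfl
    have heE : e ∈ G.E := h1 e (by simp)
    have hcw : 0 ≤ c + e.2.1 := by
      have := hnn 1
      simpa [listEL_cons, listEL_nil] using this
    have hvall : IsPrefixFrom G.E e.2.2 l := by
      refine ⟨fun f hf => h1 f (by simp [hf]), (List.isChain_cons.1 h2).2, ?_⟩
      intro f hf
      exact ((List.isChain_cons.1 h2).1 f hf).symm
    have hnnl : ∀ k, 0 ≤ (c + e.2.1) + listEL (l.take k) := by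
      intro k
      have := hnn (k + 1)
      simpa [List.take_cons, listEL_cons, add_assoc] using this
    obtain ⟨ihval, ihend⟩ := ih e.2.2 (c + e.2.1) hcw hvall hnnl
    have hlift : liftL c (e :: l) = lift1 c e :: liftL (c + e.2.1) l := rfl
    have hmem : lift1 c e ∈ ExpE G t := by
      refine Or.inl ⟨e.1, c.toNat, e.2.1, e.2.2, (c + e.2.1).toNat, by simpa using heE, ?_, ?_⟩
      · rw [Int.toNat_of_nonneg hc, Int.toNat_of_nonneg hcw]
      · simp [lift1, Int.toNat_of_nonneg hcw]
    constructor
    · rw [hlift]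
      refine ⟨?_, ?_, ?_⟩
      · intro f hf
        rcases List.mem_cons.1 hf with hf | hf
        · rw [hf]; exact hmem
        · exact ihval.1 f hf
      · refine List.isChain_cons.2 ⟨?_, ihval.2.1⟩
        intro y hy
        have := ihval.2.2 y hy
        rw [this]
        rfl
      · intro f hf
        simp only [List.head?_cons, Option.some_inj] at hf
        rw [← hf, lift1, hsrc]
    · rw [hlift, EndSt_cons]
      show EndSt (some (e.2.2, (c + e.2.1).toNat)) (liftL (c + e.2.1) l) = _
      rw [ihend, EndSt_cons, listEL_cons]
      congr 2
      ring

/-- Reaching `⊥` in the expanded game makes the mean-payoff objective fail. -/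
lemma reach_bot {G : Game S} {t : ℚ} (ht : 0 ≤ t) (γ0 : Conf S)
    (π' : ℕ → WEdge (Conf S)) (hp : IsPlay (ExpE G t) γ0 π')
    (m : ℕ) (hm : (π' m).2.2 = none) : ¬ LimsupLE (MP π') t := by
  set B : ℤ := ⌈t⌉ + 1 with hB
  have hB1 : t + 1 ≤ (B : ℚ) := by
    have := Int.le_ceil t
    push_cast [hB]
    linarith
  have hBpos : (0 : ℤ) < B := by
    have := Int.ceil_nonneg ht
    omega
  have hsrc : ∀ k, (π' (m + 1 + k)).1 = none := by
    intro k
    induction k with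
    | zero => rw [← hp.2.2 m]; exact hm
    | succ k ih =>
      have := (expE_src_none (hp.1 (m + 1 + k)) ih).1
      have h2 := hp.2.2 (m + 1 + k)
      rw [← show m + 1 + k + 1 = m + 1 + (k + 1) by omega] at *
      rw [← h2]
      exact this
  have hw : ∀ k, (π' (m + 1 + k)).2.1 = B := fun k =>
    (expE_src_none (hp.1 (m + 1 + k)) (hsrc k)).2
  have hnn : ∀ i, 0 ≤ (π' i).2.1 := fun i => expE_wt_nonneg ht (hp.1 i)
  have hEL : ∀ n, m + 1 ≤ n → ((n : ℤ) - (m + 1)) * B ≤ EL π' n := by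
    intro n hn
    induction n with
    | zero => omega
    | succ n ih =>
      rcases Nat.lt_or_ge n (m + 1) with h | h
      · have hn' : n = m := by omega
        have : EL π' (n + 1) = EL π' n + (π' n).2.1 := EL_succ π' n
        have hELnn : 0 ≤ EL π' n := Finset.sum_nonneg fun i _ => hnn i
        push_cast
        rw [this]
        have := hnn n
        nlinarith
      · have := ih h
        rw [EL_succ]
        have hwn : (π' n).2.1 = B := by
          have := hw (n - (m + 1))
          rw [show m + 1 + (n - (m + 1)) = n by omega] at this
          exact this
        rw [hwn]
        push_cast
        linarith
  intro hls
  obtain ⟨N, hN⟩ := hls (1 / 2) (by norm_num)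
  obtain ⟨n1, hn1⟩ := exists_nat_gt (2 * (m + 1) * (B : ℚ))
  set n := max (max N n1) 1 with hn
  have hnN : N ≤ n := le_trans (le_max_left _ _) (le_max_left _ _)
  have hnn1 : (n1 : ℚ) ≤ n := by
    have : n1 ≤ n := le_trans (le_max_right _ _) (le_max_left _ _)
    exact_mod_cast this
  have hnpos : 0 < n := lt_of_lt_of_le Nat.one_pos (le_max_right _ _)
  have hngt : 2 * (m + 1) * (B : ℚ) < n := lt_of_lt_of_le hn1 hnn1
  have hnm : m + 1 ≤ n := by
    by_contra hcon
    push_neg at hcon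
    have hq : (n : ℚ) < (m : ℚ) + 1 := by exact_mod_cast hcon
    have h2 : (1 : ℚ) ≤ (B : ℚ) := by linarith
    have hm0 : (0 : ℚ) ≤ (m : ℚ) := by positivity
    nlinarith [mul_le_mul_of_nonneg_left h2 (by positivity : (0 : ℚ) ≤ 2 * ((m : ℚ) + 1))]
  have hELn := hEL n hnm
  have hmp : t + 1 / 2 < MP π' n := by
    rw [MP]
    rw [lt_div_iff₀ (by exact_mod_cast hnpos)]
    have hcast : (((n : ℤ) - (m + 1)) * B : ℤ) ≤ (EL π' n : ℚ) := by
      exact_mod_cast hELn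
    push_cast at hcast
    have hstep : (t + 1 / 2) * n < ((n : ℚ) - (m + 1)) * B := by
      have hBq : t + 1 ≤ (B : ℚ) := hB1
      have h1 : ((n : ℚ) - (m + 1)) * (t + 1) ≤ ((n : ℚ) - (m + 1)) * B := by
        apply mul_le_mul_of_nonneg_left hBq
        have : ((m : ℚ) + 1) ≤ n := by exact_mod_cast hnm
        push_cast
        linarith
      have h2 : (t + 1 / 2) * n < ((n : ℚ) - (m + 1)) * (t + 1) := by
        have hmn : ((m : ℚ) + 1) * (t + 1) ≤ ((m : ℚ) + 1) * B := by
          apply mul_le_mul_of_nonneg_left hBq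
          positivity
        nlinarith [hngt, ht]
      linarith
    linarith
  have := hN n hnN
  linarith

end Expanded2

section Strategies

variable {S : Type}

/-- The expanded-game strategy induced by a strategy `σ` of the original game. -/
noncomputable def expStrat (G : Game S) (t : ℚ) (sinit : S) (d : WEdge S)
    (σ : List (WEdge S) → WEdge S) (ρ' : List (WEdge (Conf S))) : WEdge (Conf S) :=
  Option.elim (EndSt (some (sinit, 0)) ρ') ((none : Conf S), ⌈t⌉ + 1, none)
    (fun p =>
      if 0 ≤ (p.2 : ℤ) + (σ (lowL d ρ')).2.1 then
        (some p, (p.2 : ℤ) + (σ (lowL d ρ')).2.1,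
          some ((σ (lowL d ρ')).2.2, ((p.2 : ℤ) + (σ (lowL d ρ')).2.1).toNat))
      else (some p, ⌈t⌉ + 1, none))

lemma expStrat_isStrategy {G : Game S} {t : ℚ} {sinit : S} (d : WEdge S)
    {σ : List (WEdge S) → WEdge S} (hσ : IsStrategy G.E G.S0 sinit σ) :
    IsStrategy (ExpE G t) (ExpS0 G) (some (sinit, 0)) (expStrat G t sinit d σ) := by
  intro ρ' hval hend
  obtain ⟨s, c, hs0, heq⟩ := hend
  obtain ⟨hlow, hlowend, -⟩ := lower_prefix d (sinit, 0) ρ' hval (s, c) heq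
  obtain ⟨heE, hesrc⟩ := hσ (lowL d ρ') hlow (by rw [hlowend]; exact hs0)
  set e := σ (lowL d ρ') with he
  have hes : e.1 = s := by rw [hesrc]; exact hlowend
  have heE' : (s, e.2.1, e.2.2) ∈ G.E := by rw [← hes]; exact heE
  rw [expStrat, heq]
  simp only [Option.elim]
  by_cases h : 0 ≤ (c : ℤ) + e.2.1
  · rw [if_pos (by simpa using h)]
    constructor
    · exact Or.inl ⟨s, c, e.2.1, e.2.2, ((c : ℤ) + e.2.1).toNat, heE',
        by rw [Int.toNat_of_nonneg h], by rw [Int.toNat_of_nonneg h]⟩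
    · rfl
  · rw [if_neg (by simpa using h)]
    constructor
    · exact Or.inr (Or.inl ⟨s, c, e.2.1, e.2.2, heE', by omega, rfl⟩)
    · rfl

open scoped Classical in
/-- The original-game strategy induced by a strategy `σ'` of the expanded game. -/
noncomputable def lowStrat (G : Game S) (sinit : S) (d : S → WEdge S)
    (σ' : List (WEdge (Conf S)) → WEdge (Conf S)) (ρ : List (WEdge S)) : WEdge S :=
  Option.elim (σ' (liftL 0 ρ)).1 (d (EndSt sinit ρ)) (fun p =>
    Option.elim (σ' (liftL 0 ρ)).2.2 (d (EndSt sinit ρ)) (fun q =>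
      if p.1 = EndSt sinit ρ ∧ (p.1, (q.2 : ℤ) - (p.2 : ℤ), q.1) ∈ G.E then
        (p.1, (q.2 : ℤ) - (p.2 : ℤ), q.1)
      else d (EndSt sinit ρ)))

lemma lowStrat_isStrategy {G : Game S} {sinit : S} {d : S → WEdge S}
    (hd : ∀ x, d x ∈ G.E ∧ (d x).1 = x)
    (σ' : List (WEdge (Conf S)) → WEdge (Conf S)) :
    IsStrategy G.E G.S0 sinit (lowStrat G sinit d σ') := by
  intro ρ _ _
  rw [lowStrat]
  rcases h1 : (σ' (liftL 0 ρ)).1 with _ | p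
  · exact hd _
  · simp only [Option.elim]
    rcases h2 : (σ' (liftL 0 ρ)).2.2 with _ | q
    · exact hd _
    · simp only [Option.elim]
      split_ifs with hc
      · exact ⟨hc.2, hc.1⟩
      · exact hd _

end Strategies

section Forward

variable {S : Type}

lemma lowE_eq (d : WEdge S) {e : WEdge (Conf S)} {p q : S × ℕ}
    (h1 : e.1 = some p) (h2 : e.2.2 = some q) :
    lowE d e = (p.1, (q.2 : ℤ) - (p.2 : ℤ), q.1) := by
  obtain ⟨e1, e2, e3⟩ := e
  simp only at h1 h2
  subst h1; subst h2
  rfl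

/-- The forward direction: a winning strategy for `AEL(t)` in `G` yields a winning
strategy for `MP(t)` in `G'`. -/
lemma forward (G : Game S) (sinit : S) (t : ℚ) (ht : 0 ≤ t)
    (σ : List (WEdge S) → WEdge S) (hσ : IsStrategy G.E G.S0 sinit σ)
    (hwin : ∀ π, IsOutcome G.E G.S0 sinit σ π →
      (∀ n, 1 ≤ n → 0 ≤ EL π n) ∧ LimsupLE (AE π) t) :
    ∃ σ', IsStrategy (ExpE G t) (ExpS0 G) (some (sinit, 0)) σ' ∧
      ∀ π', IsOutcome (ExpE G t) (ExpS0 G) (some (sinit, 0)) σ' π' →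
        LimsupLE (MP π') t := by
  classical
  obtain ⟨w0, s0', hd⟩ := G.total sinit
  set d : WEdge S := (sinit, w0, s0') with hdd
  refine ⟨expStrat G t sinit d σ, expStrat_isStrategy d hσ, ?_⟩
  intro π' hout'
  obtain ⟨hplay', hcons'⟩ := hout'
  set γ0 : Conf S := some (sinit, 0) with hγ0
  have hpref' : ∀ n, IsPrefixFrom (ExpE G t) γ0 (Pref π' n) :=
    fun n => isPrefixFrom_Pref hplay' n
  have hend' : ∀ n, EndSt γ0 (Pref π' n) = StAt γ0 π' n := fun n => EndSt_Pref γ0 π' n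
  have key : ∀ n, (∃ p : S × ℕ, StAt γ0 π' n = some p) ∧
      Consistent G.E G.S0 sinit σ (lowL d (Pref π' n)) := by
    intro n
    induction n with
    | zero => exact ⟨⟨(sinit, 0), rfl⟩, consistent_nil _ _ _ _⟩
    | succ n ih =>
      obtain ⟨⟨p, hp⟩, hcn⟩ := ih
      obtain ⟨s, c⟩ := p
      have hendn : EndSt γ0 (Pref π' n) = some (s, c) := by rw [hend' n, hp]
      obtain ⟨hlow, hlowend, hlistEL⟩ :=
        lower_prefix d (sinit, 0) (Pref π' n) (hpref' n) (s, c) hendn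
      have hEL0 : listEL (lowL d (Pref π' n)) = (c : ℤ) := by simpa using hlistEL
      have hsrc : (π' n).1 = some (s, c) := by rw [src_eq_StAt hplay' n, hp]
      have noNeg : ∀ e : WEdge S, e ∈ G.E → e.1 = s →
          (EndSt sinit (lowL d (Pref π' n)) ∈ G.S0 → e = σ (lowL d (Pref π' n))) →
          0 ≤ (c : ℤ) + e.2.1 := by
        intro e heE he1 hecons
        by_contra hneg
        push_neg at hneg
        have hsnoc : Consistent G.E G.S0 sinit σ (lowL d (Pref π' n) ++ [e]) :=
          hcn.snoc heE (by rw [he1, hlowend]) hecons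
        obtain ⟨π, hout, hprefeq⟩ := exists_outcome_extending hσ G.total _ hsnoc
        have hlen : (lowL d (Pref π' n) ++ [e]).length = n + 1 := by
          simp [lowL, Pref_length]
        have hELπ : EL π ((lowL d (Pref π' n) ++ [e]).length) = (c : ℤ) + e.2.1 := by
          rw [EL_eq_listEL, hprefeq, listEL_snoc, hEL0]
        have := (hwin π hout).1 ((lowL d (Pref π' n) ++ [e]).length) (by rw [hlen]; omega)
        rw [hELπ] at this
        omega
      have hπ'nE : π' n ∈ ExpE G t := hplay'.1 n
      by_cases hS0 : s ∈ G.S0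
      · -- a state of P₀: the move is the strategy's move
        have hmem : EndSt γ0 (Pref π' n) ∈ ExpS0 G := by
          rw [hendn]; exact ⟨s, c, hS0, rfl⟩
        have hπσ : π' n = expStrat G t sinit d σ (Pref π' n) := hcons' n hmem
        obtain ⟨heE, hesrc⟩ := hσ (lowL d (Pref π' n)) hlow (by rw [hlowend]; exact hS0)
        set e := σ (lowL d (Pref π' n)) with he
        have hes : e.1 = s := by rw [hesrc, hlowend]
        have h0 : 0 ≤ (c : ℤ) + e.2.1 := noNeg e heE hes (fun _ => rfl)
        have hval : expStrat G t sinit d σ (Pref π' n)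
            = (some (s, c), (c : ℤ) + e.2.1, some (e.2.2, ((c : ℤ) + e.2.1).toNat)) := by
          rw [expStrat, hendn]
          simp only [Option.elim]
          rw [if_pos (by simpa using h0)]
        rw [hval] at hπσ
        constructor
        · exact ⟨(e.2.2, ((c : ℤ) + e.2.1).toNat),
            by show (π' n).2.2 = _; rw [hπσ]⟩
        · have hlowe : lowE d (π' n) = e := by
            rw [lowE_eq d (by rw [hπσ] : (π' n).1 = some (s, c))
              (by rw [hπσ] : (π' n).2.2 = some (e.2.2, ((c : ℤ) + e.2.1).toNat))]
            show (s, (((c : ℤ) + e.2.1).toNat : ℤ) - (c : ℤ), e.2.2) = e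
            rw [Int.toNat_of_nonneg h0]
            have h2 : (c : ℤ) + e.2.1 - (c : ℤ) = e.2.1 := by ring
            rw [h2, ← hes]
          rw [Pref_succ]
          show Consistent G.E G.S0 sinit σ (lowL d (Pref π' n ++ [π' n]))
          rw [lowL, List.map_append]
          show Consistent G.E G.S0 sinit σ (lowL d (Pref π' n) ++ [lowE d (π' n)])
          rw [hlowe]
          exact hcn.snoc heE (by rw [hes, hlowend]) (fun _ => rfl)
      · -- a state of P₁
        rcases hπ'nE with ⟨a, ca, w, b, cb, hE, hsum, hedge⟩ |
          ⟨a, ca, w, b, hE, hneg, hedge⟩ | hedge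
        · -- first-kind edge
          rw [hedge] at hsrc
          simp only [Option.some_inj, Prod.mk.injEq] at hsrc
          obtain ⟨rfl, rfl⟩ := hsrc
          constructor
          · exact ⟨(b, cb), by show (π' n).2.2 = _; rw [hedge]⟩
          · have hlowe : lowE d (π' n) = (a, (cb : ℤ) - (ca : ℤ), b) :=
              lowE_eq d (by rw [hedge] : (π' n).1 = some (a, ca))
                (by rw [hedge] : (π' n).2.2 = some (b, cb))
            have hwe : (cb : ℤ) - (ca : ℤ) = w := by omega
            rw [Pref_succ]
            show Consistent G.E G.S0 sinit σ (lowL d (Pref π' n ++ [π' n]))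
            rw [lowL, List.map_append]
            show Consistent G.E G.S0 sinit σ (lowL d (Pref π' n) ++ [lowE d (π' n)])
            rw [hlowe, hwe]
            exact hcn.snoc hE hlowend.symm
              (fun h => absurd (by rw [hlowend] at h; exact h) hS0)
        · -- second-kind edge: contradiction with `noNeg`
          rw [hedge] at hsrc
          simp only [Option.some_inj, Prod.mk.injEq] at hsrc
          obtain ⟨rfl, rfl⟩ := hsrc
          exfalso
          have h0 : 0 ≤ (ca : ℤ) + w :=
            noNeg (a, w, b) hE rfl
              (fun h => absurd (by rw [hlowend] at h; exact h) hS0)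
          omega
        · rw [hedge] at hsrc; simp at hsrc
  -- the lowered play
  set π : ℕ → WEdge S := fun i => lowE d (π' i) with hπdef
  have hlowpref : ∀ n, lowL d (Pref π' n) = Pref π n := fun n => lowL_pref d π' n
  have hfk : ∀ n, ∃ pn pn1 : S × ℕ, StAt γ0 π' n = some pn ∧ StAt γ0 π' (n+1) = some pn1 ∧
      (π' n).2.1 = (pn1.2 : ℤ) ∧ π n = (pn.1, (pn1.2 : ℤ) - (pn.2 : ℤ), pn1.1) ∧
      π n ∈ G.E := by
    intro n
    obtain ⟨⟨pn, hpn⟩, -⟩ := key n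
    obtain ⟨⟨pn1, hpn1⟩, -⟩ := key (n+1)
    have hsrc : (π' n).1 = some pn := by rw [src_eq_StAt hplay' n, hpn]
    have htgt : (π' n).2.2 = some pn1 := hpn1
    obtain ⟨hw, hEmem⟩ := expE_firstKind (hplay'.1 n) hsrc htgt
    have hlowe : π n = (pn.1, (pn1.2 : ℤ) - (pn.2 : ℤ), pn1.1) := lowE_eq d hsrc htgt
    exact ⟨pn, pn1, hpn, hpn1, hw, hlowe, hlowe ▸ hEmem⟩
  have houtπ : IsOutcome G.E G.S0 sinit σ π := by
    refine ⟨⟨?_, ?_, ?_⟩, ?_⟩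
    · intro i
      obtain ⟨pn, pn1, _, _, _, _, hmem⟩ := hfk i
      exact hmem
    · obtain ⟨p0, p1, hp0, _, _, hlow0, _⟩ := hfk 0
      have hp0' : p0 = (sinit, 0) := by
        have : (some (sinit, 0) : Conf S) = some p0 := hp0
        exact (Option.some_inj.1 this).symm
      rw [hlow0, hp0']
    · intro i
      obtain ⟨pn, pn1, _, hpn1, _, hlowi, _⟩ := hfk i
      obtain ⟨qn, qn1, hqn, _, _, hlowi1, _⟩ := hfk (i+1)
      have hq : pn1 = qn := by rw [hpn1] at hqn; exact Option.some_inj.1 hqn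
      rw [hlowi, hlowi1, hq]
    · intro n hmem
      have hc := (key (n+1)).2
      rw [hlowpref (n+1)] at hc
      have hcc := hc.2 n (by rw [Pref_length]; omega)
      rw [Pref_take π (Nat.le_succ n), Pref_get] at hcc
      exact hcc hmem
  obtain ⟨hELnn, hAE⟩ := hwin π houtπ
  have hELc : ∀ n (p : S × ℕ), StAt γ0 π' n = some p → EL π n = (p.2 : ℤ) := by
    intro n p hp
    have hendn : EndSt γ0 (Pref π' n) = some p := by rw [hend' n, hp]
    obtain ⟨-, -, h3⟩ := lower_prefix d (sinit, 0) (Pref π' n) (hpref' n) p hendn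
    rw [EL_eq_listEL, ← hlowpref n]
    simpa using h3
  have hwEL : ∀ n, (π' n).2.1 = EL π (n+1) := by
    intro n
    obtain ⟨pn, pn1, _, hpn1, hw, _, _⟩ := hfk n
    rw [hw, hELc (n+1) pn1 hpn1]
  have hMPAE : ∀ n, MP π' n = AE π n := by
    intro n
    have hsum : EL π' n = ∑ i ∈ Finset.range n, EL π (i + 1) := by
      rw [EL]
      exact Finset.sum_congr rfl fun i _ => hwEL i
    rw [MP, AE, hsum]
    congr 1
    push_cast
    rfl
  intro ε hε
  obtain ⟨N, hN⟩ := hAE ε hε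
  exact ⟨N, fun n hn => by rw [hMPAE n]; exact hN n hn⟩

end Forward

section Backward

variable {S : Type} {α : Type*}

lemma Pref_getElem? (π : ℕ → WEdge α) {n k : ℕ} (h : k < n) :
    (Pref π n)[k]? = some (π k) := by
  have h' : k < (Pref π n).length := by rw [Pref_length]; exact h
  rw [List.getElem?_eq_getElem h']
  congr 1
  simp [Pref, List.getElem_ofFn]

/-- The backward direction: a winning strategy for `MP(t)` in `G'` yields a winning
strategy for `AEL(t)` in `G`. -/
lemma backward (G : Game S) (sinit : S) (t : ℚ) (ht : 0 ≤ t)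
    (σ' : List (WEdge (Conf S)) → WEdge (Conf S))
    (hσ' : IsStrategy (ExpE G t) (ExpS0 G) (some (sinit, 0)) σ')
    (hwin' : ∀ π', IsOutcome (ExpE G t) (ExpS0 G) (some (sinit, 0)) σ' π' →
      LimsupLE (MP π') t) :
    ∃ σ, IsStrategy G.E G.S0 sinit σ ∧ ∀ π, IsOutcome G.E G.S0 sinit σ π →
      (∀ n, 1 ≤ n → 0 ≤ EL π n) ∧ LimsupLE (AE π) t := by
  classical
  have hdex : ∀ x : S, ∃ e : WEdge S, e ∈ G.E ∧ e.1 = x := by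
    intro x; obtain ⟨w, x', h⟩ := G.total x; exact ⟨(x, w, x'), h, rfl⟩
  choose d hd using hdex
  set σ : List (WEdge S) → WEdge S := lowStrat G sinit d σ' with hσdef
  refine ⟨σ, lowStrat_isStrategy hd σ', ?_⟩
  intro π hout
  obtain ⟨hplay, hcons⟩ := hout
  set γ0 : Conf S := some (sinit, 0) with hγ0
  have hsrcSt : ∀ n, (π n).1 = StAt sinit π n := src_eq_StAt hplay
  have hendSt : ∀ n, EndSt sinit (Pref π n) = StAt sinit π n := EndSt_Pref sinit π
  -- no σ'-consistent extension can go to ⊥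
  have hnobot : ∀ ρ' : List (WEdge (Conf S)), Consistent (ExpE G t) (ExpS0 G) γ0 σ' ρ' →
      ∀ e' : WEdge (Conf S), e' ∈ ExpE G t → e'.1 = EndSt γ0 ρ' →
      (EndSt γ0 ρ' ∈ ExpS0 G → e' = σ' ρ') → e'.2.2 ≠ none := by
    intro ρ' hcρ e' he' hsrce hconde hbot
    have hsnoc : Consistent (ExpE G t) (ExpS0 G) γ0 σ' (ρ' ++ [e']) :=
      hcρ.snoc he' hsrce hconde
    obtain ⟨π'', hout'', hpref''⟩ := exists_outcome_extending hσ' (expE_total G t) _ hsnoc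
    have h1 : (Pref π'' ((ρ' ++ [e']).length))[ρ'.length]? = some (π'' ρ'.length) :=
      Pref_getElem? π'' (by simp)
    rw [hpref''] at h1
    have h2 : (ρ' ++ [e'])[ρ'.length]? = some e' := by simp
    rw [h2] at h1
    have hlast : π'' ρ'.length = e' := (Option.some_inj.1 h1).symm
    exact reach_bot ht γ0 π'' hout''.1 ρ'.length (by rw [hlast]; exact hbot)
      (hwin' π'' hout'')
  -- key invariant
  have key : ∀ n, (∀ k, k ≤ n → 0 ≤ EL π k) ∧
      Consistent (ExpE G t) (ExpS0 G) γ0 σ' (liftL 0 (Pref π n)) := by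
    intro n
    induction n with
    | zero =>
      refine ⟨fun k hk => ?_, consistent_nil _ _ _ _⟩
      have hk0 : k = 0 := by omega
      subst hk0
      simp [EL_zero]
    | succ n ih =>
      obtain ⟨hnn, hcn⟩ := ih
      have hval : IsPrefixFrom G.E sinit (Pref π n) := isPrefixFrom_Pref hplay n
      have hnn' : ∀ k, 0 ≤ (0 : ℤ) + listEL ((Pref π n).take k) := by
        intro k
        rcases le_or_gt k n with h | h
        · rw [Pref_take π h, ← EL_eq_listEL]
          simpa using hnn k h
        · rw [List.take_of_length_le (by rw [Pref_length]; omega), ← EL_eq_listEL]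
          simpa using hnn n le_rfl
      have hlval := (lift_prefix (t := t) sinit 0 le_rfl (Pref π n) hval hnn').1
      have hlend := (lift_prefix (t := t) sinit 0 le_rfl (Pref π n) hval hnn').2
      have hlvalγ : IsPrefixFrom (ExpE G t) γ0 (liftL 0 (Pref π n)) := hlval
      set s := StAt sinit π n with hsdef
      set cz := EL π n with hcz
      have hc0 : 0 ≤ cz := by simpa [hcz] using hnn n le_rfl
      have hw2 : ((cz.toNat : ℕ) : ℤ) = cz := Int.toNat_of_nonneg hc0
      have hlend' : EndSt γ0 (liftL 0 (Pref π n)) = some (s, cz.toNat) := by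
        have h0 : EndSt γ0 (liftL 0 (Pref π n))
            = some (EndSt sinit (Pref π n), ((0 : ℤ) + listEL (Pref π n)).toNat) := hlend
        rw [h0, hendSt n]
        congr 2
        rw [zero_add, ← EL_eq_listEL]
      have hE : π n ∈ G.E := hplay.1 n
      have hsrcn : (π n).1 = s := hsrcSt n
      have hEL1 : EL π (n + 1) = cz + (π n).2.1 := EL_succ π n
      have hliftsucc : liftL 0 (Pref π (n + 1))
          = liftL 0 (Pref π n) ++ [lift1 cz (π n)] := by
        rw [Pref_succ, liftL_snoc]
        congr 2
        rw [zero_add, ← EL_eq_listEL]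
      by_cases hS0 : s ∈ G.S0
      · -- P₀ state
        have hmem : EndSt γ0 (liftL 0 (Pref π n)) ∈ ExpS0 G := by
          rw [hlend']; exact ⟨s, cz.toNat, hS0, rfl⟩
        have hπσ : π n = σ (Pref π n) := hcons n (by rw [hendSt n]; exact hS0)
        obtain ⟨he'E, he'src⟩ := hσ' (liftL 0 (Pref π n)) hlvalγ hmem
        have he'1 : (σ' (liftL 0 (Pref π n))).1 = some (s, cz.toNat) := by
          rw [he'src, hlend']
        have hne : (σ' (liftL 0 (Pref π n))).2.2 ≠ none :=
          hnobot _ hcn _ he'E he'src (fun _ => rfl)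
        obtain ⟨q, hq⟩ : ∃ q : S × ℕ, (σ' (liftL 0 (Pref π n))).2.2 = some q := by
          cases hee : (σ' (liftL 0 (Pref π n))).2.2 with
          | none => exact absurd hee hne
          | some q => exact ⟨q, rfl⟩
        obtain ⟨hw', hlowE⟩ := expE_firstKind he'E he'1 hq
        have he'eta : σ' (liftL 0 (Pref π n)) = (some (s, cz.toNat), (q.2 : ℤ), some q) :=
          Prod.ext he'1 (Prod.ext hw' hq)
        have hσval : σ (Pref π n) = (s, (q.2 : ℤ) - cz, q.1) := by
          show lowStrat G sinit d σ' (Pref π n) = _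
          rw [lowStrat, he'eta]
          simp only [Option.elim]
          rw [if_pos ⟨(hendSt n).symm, hlowE⟩]
          simp [hw2]
        rw [hσval] at hπσ
        have hq2 : EL π (n + 1) = (q.2 : ℤ) := by
          rw [hEL1, hπσ]
          show cz + ((q.2 : ℤ) - cz) = (q.2 : ℤ)
          ring
        have hlift1 : lift1 cz (π n) = σ' (liftL 0 (Pref π n)) := by
          have harith : cz + ((q.2 : ℤ) - cz) = (q.2 : ℤ) := by ring
          rw [hπσ, he'eta, lift1]
          simp only
          rw [harith]
          simp [Int.toNat_natCast]
        refine ⟨?_, ?_⟩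
        · intro k hk
          rcases le_or_gt k n with h | h
          · exact hnn k h
          · have hkn : k = n + 1 := by omega
            subst hkn
            rw [hq2]
            positivity
        · rw [hliftsucc, hlift1]
          exact hcn.snoc he'E he'src (fun _ => rfl)
      · -- P₁ state
        have hnotmem : EndSt γ0 (liftL 0 (Pref π n)) ∉ ExpS0 G := by
          rw [hlend']
          rintro ⟨s1, c1, hs1, heq⟩
          rw [Option.some_inj] at heq
          have hss : s = s1 := congrArg Prod.fst heq
          exact hS0 (hss ▸ hs1)
        rcases lt_or_ge (cz + (π n).2.1) 0 with hneg | hpos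
        · exfalso
          have hbotE : ((some (s, cz.toNat), ⌈t⌉ + 1, (none : Conf S)) : WEdge (Conf S))
              ∈ ExpE G t := by
            refine Or.inr (Or.inl ⟨s, cz.toNat, (π n).2.1, (π n).2.2, ?_, ?_, rfl⟩)
            · rw [← hsrcn]; exact hE
            · rw [hw2]; exact hneg
          exact hnobot _ hcn _ hbotE (by rw [hlend']) (fun h => absurd h hnotmem) rfl
        · have hmemE : lift1 cz (π n) ∈ ExpE G t := by
            refine Or.inl ⟨(π n).1, cz.toNat, (π n).2.1, (π n).2.2,
              (cz + (π n).2.1).toNat, hE, ?_, ?_⟩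
            · rw [hw2, Int.toNat_of_nonneg hpos]
            · show (some ((π n).1, cz.toNat), cz + (π n).2.1,
                  some ((π n).2.2, (cz + (π n).2.1).toNat)) = _
              rw [Int.toNat_of_nonneg hpos]
          refine ⟨?_, ?_⟩
          · intro k hk
            rcases le_or_gt k n with h | h
            · exact hnn k h
            · have hkn : k = n + 1 := by omega
              subst hkn
              rw [hEL1]; exact hpos
          · rw [hliftsucc]
            refine hcn.snoc hmemE ?_ (fun h => absurd h hnotmem)
            show (some ((π n).1, cz.toNat) : Conf S) = EndSt γ0 (liftL 0 (Pref π n))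
            rw [hlend', hsrcn]
  -- assemble the lifted play and conclude
  set π₂ : ℕ → WEdge (Conf S) := fun i => lift1 (EL π i) (π i) with hπ₂
  have hliftpref : ∀ n, liftL 0 (Pref π n) = Pref π₂ n := fun n => liftL_pref π n
  have hout₂ : IsOutcome (ExpE G t) (ExpS0 G) γ0 σ' π₂ := by
    refine ⟨⟨?_, ?_, ?_⟩, ?_⟩
    · intro i
      have hv := (key (i + 1)).2.1.1
      rw [hliftpref (i + 1)] at hv
      refine hv (π₂ i) ?_
      have := Pref_get π₂ (i + 1) i (by rw [Pref_length]; omega)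
      rw [← this]
      exact List.get_mem _ _
    · have h0 : (EL π 0).toNat = 0 := by rw [EL_zero]; rfl
      show (some ((π 0).1, (EL π 0).toNat) : Conf S) = γ0
      rw [hplay.2.1, h0, hγ0]
    · intro i
      show (some ((π i).2.2, (EL π i + (π i).2.1).toNat) : Conf S)
        = some ((π (i + 1)).1, (EL π (i + 1)).toNat)
      rw [hplay.2.2 i, EL_succ]
    · intro n hmem
      have hc := (key (n + 1)).2
      rw [hliftpref (n + 1)] at hc
      have hcc := hc.2 n (by rw [Pref_length]; omega)
      rw [Pref_take π₂ (Nat.le_succ n), Pref_get] at hcc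
      exact hcc hmem
  have hMPL := hwin' π₂ hout₂
  have hwEL : ∀ i, (π₂ i).2.1 = EL π (i + 1) := by
    intro i
    show EL π i + (π i).2.1 = EL π (i + 1)
    rw [EL_succ]
  have hMPAE : ∀ n, MP π₂ n = AE π n := by
    intro n
    have hsum : EL π₂ n = ∑ i ∈ Finset.range n, EL π (i + 1) := by
      rw [EL]
      exact Finset.sum_congr rfl fun i _ => hwEL i
    rw [MP, AE, hsum]
    congr 1
    push_cast
    rfl
  constructor
  · intro n _
    exact (key n).1 n le_rfl
  · intro ε hε
    obtain ⟨N, hN⟩ := hMPL ε hε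
    exact ⟨N, fun n hn => by rw [← hMPAE n]; exact hN n hn⟩

end Backward

end Aux

/-- Player `P₀` has a winning strategy in the finite weighted game `G`
from `s_init` for the objective `AEL(t) = EGL ∩ AE(t)` (energy always nonnegative and
average-energy at most `t`) if, and only if, `P₀` has a winning strategy in the expanded
infinite-state game `G'` from the configuration `(s_init, 0)` for the mean-payoff
objective `MP(t)`. -/
theorem statement0 {S : Type} [Fintype S] (G : Game S) (sinit : S) (t : ℚ) (ht : 0 ≤ t) :
    (∃ σ, IsStrategy G.E G.S0 sinit σ ∧
        ∀ π, IsOutcome G.E G.S0 sinit σ π →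
          (∀ n, 1 ≤ n → 0 ≤ EL π n) ∧ LimsupLE (AE π) t) ↔
    (∃ σ', IsStrategy (ExpE G t) (ExpS0 G) (some (sinit, 0)) σ' ∧
        ∀ π', IsOutcome (ExpE G t) (ExpS0 G) (some (sinit, 0)) σ' π' →
          LimsupLE (MP π') t) := by
  constructor
  · rintro ⟨σ, hσ, hwin⟩
    exact forward G sinit t ht σ hσ hwin
  · rintro ⟨σ', hσ', hwin'⟩
    exact backward G sinit t ht σ' hσ' hwin'

end AvgEnergy
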